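/- arXiv:1506.06683 — 5 statements merged into one kernel-verified Lean document; each statement's English description precedes it below -/
import Mathlib

section
/- With the notation above, the map φ_μ : L → [0,1], w ↦ μ([w_min, w]), is surjective. -/
set_option linter.unusedSectionVars false


open MeasureTheory Topology Filter Set

/-- The shift map on one-sided infinite words, erasing the first letter. -/
def shiftMap {A : Type*} (w : ℕ → A) : ℕ → A := fun n => w (n + 1)

/-- A shift space: a closed, shift-invariant subset of `A^ℕ`. -/
def IsShiftSpace {A : Type*} [TopologicalSpace A] (L : Set (ℕ → A)) : Prop :=
  IsClosed L ∧ ∀ w ∈ L, shiftMap w ∈ L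

/-- The finite word `v` occurs in `w` at position `j`. -/
def OccursAt {A : Type*} (w : ℕ → A) (j : ℕ) (v : List A) : Prop :=
  ∀ i : Fin v.length, w (j + i) = v.get i

/-- `v` is a factor (subblock) of the language of `L`. -/
def IsFactor {A : Type*} (L : Set (ℕ → A)) (v : List A) : Prop :=
  ∃ w ∈ L, ∃ j, OccursAt w j v

/-- The cylinder of `v` in `L`: words of `L` having `v` as a prefix. -/
def Cyl {A : Type*} (L : Set (ℕ → A)) (v : List A) : Set (ℕ → A) :=
  {w ∈ L | OccursAt w 0 v}

/-- Strict lexicographic order on infinite words. -/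
def LexLt {A : Type*} [LinearOrder A] (w w' : ℕ → A) : Prop :=
  ∃ n, (∀ i < n, w i = w' i) ∧ w n < w' n

/-- Lexicographic order (non-strict) on infinite words. -/
def LexLe {A : Type*} [LinearOrder A] (w w' : ℕ → A) : Prop := LexLt w w' ∨ w = w'

/-- The word interval `[w, w']` in `L` for the lexicographic order. -/
def wordInterval {A : Type*} [LinearOrder A] (L : Set (ℕ → A)) (w w' : ℕ → A) :
    Set (ℕ → A) := {z ∈ L | LexLe w z ∧ LexLe z w'}

/-- The length-`n` prefix of an infinite word, as a list. -/
def prefixWord {A : Type*} (w : ℕ → A) (n : ℕ) : List A := List.ofFn (fun i : Fin n => w i)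

/-- A factor is left special if it has at least two distinct left one-letter extensions. -/
def IsLeftSpecial {A : Type*} (L : Set (ℕ → A)) (v : List A) : Prop :=
  ∃ a b : A, a ≠ b ∧ IsFactor L (a :: v) ∧ IsFactor L (b :: v)

/-- A factor is right special if it has at least two distinct right one-letter extensions. -/
def IsRightSpecial {A : Type*} (L : Set (ℕ → A)) (v : List A) : Prop :=
  ∃ a b : A, a ≠ b ∧ IsFactor L (v ++ [a]) ∧ IsFactor L (v ++ [b])

/-- The set of infinite left special words: all prefixes are left special factors. -/
def SPset {A : Type*} (L : Set (ℕ → A)) : Set (ℕ → A) :=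
  {w | ∀ n : ℕ, IsLeftSpecial L (prefixWord w n)}

/-- The factor complexity `p_L(n)`: the number of distinct length-`n` factors of `L`. -/
noncomputable def complexity {A : Type*} (L : Set (ℕ → A)) (n : ℕ) : ℕ :=
  Nat.card {v : List A // v.length = n ∧ IsFactor L v}

/-- The number of left special factors of length `n`. -/
noncomputable def splCount {A : Type*} (L : Set (ℕ → A)) (n : ℕ) : ℕ :=
  Nat.card {v : List A // v.length = n ∧ IsFactor L v ∧ IsLeftSpecial L v}

/-- A minimal shift: a nonempty shift space with no nonempty proper subshift. -/
def IsMinimalShift {A : Type*} [TopologicalSpace A] (L : Set (ℕ → A)) : Prop :=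
  IsShiftSpace L ∧ L.Nonempty ∧
    ∀ L' ⊆ L, IsShiftSpace L' → L'.Nonempty → L' = L

/-- Aperiodicity: no periodic word in `L`. -/
def IsAperiodic {A : Type*} (L : Set (ℕ → A)) : Prop :=
  ∀ w ∈ L, ∀ k : ℕ, 0 < k → shiftMap^[k] w ≠ w

/-- The factor set of `L` is prolongable: every factor extends by a letter on both sides. -/
def Prolongable {A : Type*} (L : Set (ℕ → A)) : Prop :=
  ∀ v : List A, IsFactor L v →
    (∃ a : A, IsFactor L (a :: v)) ∧ (∃ b : A, IsFactor L (v ++ [b]))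

section Order
variable {A : Type*} [LinearOrder A]

lemma lexLt_iff (w w' : ℕ → A) : LexLt w w' ↔ toLex w < toLex w' := Iff.rfl

lemma lexLe_iff (w w' : ℕ → A) : LexLe w w' ↔ toLex w ≤ toLex w' := by
  rw [le_iff_lt_or_eq, LexLe, lexLt_iff]
  exact or_congr Iff.rfl toLex.injective.eq_iff.symm

lemma prefixWord_succ (w : ℕ → A) (n : ℕ) :
    prefixWord w (n + 1) = prefixWord w n ++ [w n] := by
  rw [prefixWord, List.ofFn_succ']
  simp [prefixWord, List.concat_eq_append]

lemma prefixWord_length (w : ℕ → A) (n : ℕ) : (prefixWord w n).length = n := by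
  simp [prefixWord]

lemma prefixWord_eq_iff (z w : ℕ → A) (n : ℕ) :
    prefixWord z n = prefixWord w n ↔ ∀ i < n, z i = w i := by
  rw [prefixWord, prefixWord, List.ofFn_inj, funext_iff]
  exact ⟨fun h i hi => h ⟨i, hi⟩, fun h i => h i i.2⟩

end Order

section Choose
variable {A : Type*} [Fintype A] [LinearOrder A] [Nonempty A]

/-- The candidate set of next letters extending prefix `v` inside `C`. -/
noncomputable def extSet (C : Set (ℕ → A)) (v : List A) : Finset A := by
  classical
  exact Finset.univ.filter fun a : A => ∃ z ∈ C, prefixWord z (v.length + 1) = v ++ [a]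

lemma mem_extSet {C : Set (ℕ → A)} {v : List A} {a : A} :
    a ∈ extSet C v ↔ ∃ z ∈ C, prefixWord z (v.length + 1) = v ++ [a] := by
  classical
  simp [extSet]

noncomputable def selStep (C : Set (ℕ → A)) (sel : (s : Finset A) → s.Nonempty → A)
    (v : List A) : A :=
  if h : (extSet C v).Nonempty then sel _ h else Classical.arbitrary A

noncomputable def selPref (C : Set (ℕ → A)) (sel : (s : Finset A) → s.Nonempty → A) :
    ℕ → List A
  | 0 => []
  | n + 1 => selPref C sel n ++ [selStep C sel (selPref C sel n)]

noncomputable def selWord (C : Set (ℕ → A)) (sel : (s : Finset A) → s.Nonempty → A)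
    (n : ℕ) : A := selStep C sel (selPref C sel n)

lemma selPref_length (C : Set (ℕ → A)) (sel : (s : Finset A) → s.Nonempty → A) (n : ℕ) :
    (selPref C sel n).length = n := by
  induction n with
  | zero => rfl
  | succ n ih => simp [selPref, ih]

lemma prefixWord_selWord (C : Set (ℕ → A)) (sel : (s : Finset A) → s.Nonempty → A) (n : ℕ) :
    prefixWord (selWord C sel) n = selPref C sel n := by
  induction n with
  | zero => simp [prefixWord, selPref]
  | succ n ih => rw [prefixWord_succ, ih]; rfl

lemma selWord_spec (C : Set (ℕ → A)) (sel : (s : Finset A) → s.Nonempty → A)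
    (hsel : ∀ s h, sel s h ∈ s) (hne : C.Nonempty) (n : ℕ) :
    ∃ z ∈ C, prefixWord z n = selPref C sel n := by
  induction n with
  | zero => exact ⟨hne.some, hne.some_mem, by simp [prefixWord, selPref]⟩
  | succ n ih =>
    obtain ⟨z, hz, hpz⟩ := ih
    have hmem : z n ∈ extSet C (selPref C sel n) := by
      rw [mem_extSet]
      exact ⟨z, hz, by rw [selPref_length, prefixWord_succ, hpz]⟩
    have hext : (extSet C (selPref C sel n)).Nonempty := ⟨z n, hmem⟩
    have := hsel _ hext
    rw [mem_extSet] at this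
    obtain ⟨z', hz', hpz'⟩ := this
    refine ⟨z', hz', ?_⟩
    rw [selPref_length] at hpz'
    rw [hpz']
    show selPref C sel n ++ [sel _ hext] = selPref C sel (n + 1)
    rw [show selPref C sel (n + 1) = selPref C sel n ++ [selStep C sel (selPref C sel n)] from rfl,
      selStep, dif_pos hext]

lemma selWord_mem [TopologicalSpace A] {C : Set (ℕ → A)} (hC : IsClosed C)
    (sel : (s : Finset A) → s.Nonempty → A)
    (hsel : ∀ s h, sel s h ∈ s) (hne : C.Nonempty) : selWord C sel ∈ C := by
  choose z hz hpz using selWord_spec C sel hsel hne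
  have ht : Tendsto z atTop (𝓝 (selWord C sel)) := by
    rw [tendsto_pi_nhds]
    intro i
    apply tendsto_nhds_of_eventually_eq
    filter_upwards [eventually_ge_atTop (i + 1)] with n hn
    have heq : prefixWord (z n) n = prefixWord (selWord C sel) n := by
      rw [hpz n, prefixWord_selWord]
    exact (prefixWord_eq_iff _ _ n).1 heq i (lt_of_lt_of_le (Nat.lt_succ_self i) hn)
  exact hC.mem_of_tendsto ht (Eventually.of_forall hz)

lemma selWord_agree_below {C : Set (ℕ → A)} {sel : (s : Finset A) → s.Nonempty → A}
    {z : ℕ → A} (hz : z ∈ C) {n : ℕ} (hlow : ∀ i < n, selWord C sel i = z i) :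
    z n ∈ extSet C (selPref C sel n) := by
  rw [mem_extSet]
  refine ⟨z, hz, ?_⟩
  rw [selPref_length, prefixWord_succ, ← prefixWord_selWord C sel n,
    (prefixWord_eq_iff z (selWord C sel) n).2 fun i hi => (hlow i hi).symm]

lemma selWord_min {C : Set (ℕ → A)} (hsel' : ∀ s h a, a ∈ s → sel' s h ≤ a)
    {z : ℕ → A} (hz : z ∈ C) : LexLe (selWord C sel') z := by
  by_cases hzw : selWord C sel' = z
  · exact Or.inr hzw
  · left
    have hne' : ∃ n, selWord C sel' n ≠ z n := by
      by_contra h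
      push_neg at h
      exact hzw (funext h)
    have hlow : ∀ i < Nat.find hne', selWord C sel' i = z i :=
      fun i hi => not_not.1 (Nat.find_min hne' hi)
    have hmem := selWord_agree_below hz hlow
    have hle : selWord C sel' (Nat.find hne') ≤ z (Nat.find hne') := by
      show selStep C sel' _ ≤ _
      rw [selStep, dif_pos ⟨_, hmem⟩]
      exact hsel' _ _ _ hmem
    exact ⟨Nat.find hne', hlow, lt_of_le_of_ne hle (Nat.find_spec hne')⟩

lemma selWord_max {C : Set (ℕ → A)} (hsel' : ∀ s h a, a ∈ s → a ≤ sel' s h)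
    {z : ℕ → A} (hz : z ∈ C) : LexLe z (selWord C sel') := by
  by_cases hzw : z = selWord C sel'
  · exact Or.inr hzw
  · left
    have hne' : ∃ n, selWord C sel' n ≠ z n := by
      by_contra h
      push_neg at h
      exact hzw (funext fun n => (h n).symm)
    have hlow : ∀ i < Nat.find hne', selWord C sel' i = z i :=
      fun i hi => not_not.1 (Nat.find_min hne' hi)
    have hmem := selWord_agree_below hz hlow
    have hle : z (Nat.find hne') ≤ selWord C sel' (Nat.find hne') := by
      show _ ≤ selStep C sel' _
      rw [selStep, dif_pos ⟨_, hmem⟩]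
      exact hsel' _ _ _ hmem
    exact ⟨Nat.find hne', fun i hi => (hlow i hi).symm,
      lt_of_le_of_ne hle fun h => Nat.find_spec hne' h.symm⟩

end Choose

theorem exists_lex_min {A : Type*} [Fintype A] [LinearOrder A] [TopologicalSpace A]
    {C : Set (ℕ → A)} (hC : IsClosed C) (hne : C.Nonempty) :
    ∃ w ∈ C, ∀ z ∈ C, LexLe w z := by
  haveI : Nonempty A := ⟨hne.some 0⟩
  exact ⟨selWord C (fun s h => s.min' h),
    selWord_mem hC _ (fun s h => s.min'_mem h) hne,
    fun z hz => selWord_min (fun s h a ha => s.min'_le a ha) hz⟩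

theorem exists_lex_max {A : Type*} [Fintype A] [LinearOrder A] [TopologicalSpace A]
    {C : Set (ℕ → A)} (hC : IsClosed C) (hne : C.Nonempty) :
    ∃ w ∈ C, ∀ z ∈ C, LexLe z w := by
  haveI : Nonempty A := ⟨hne.some 0⟩
  exact ⟨selWord C (fun s h => s.max' h),
    selWord_mem hC _ (fun s h => s.max'_mem h) hne,
    fun z hz => selWord_max (fun s h a ha => s.le_max' a ha) hz⟩

section Meas
variable {A : Type*} [LinearOrder A] [TopologicalSpace A] [DiscreteTopology A]
  [MeasurableSpace A] [BorelSpace A]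

lemma measurableSet_letter (i : ℕ) (s : Set A) : MeasurableSet {u : ℕ → A | u i ∈ s} :=
  measurable_pi_apply i ((isOpen_discrete s).measurableSet)

lemma measurableSet_agree (v : ℕ → A) (n : ℕ) :
    MeasurableSet {u : ℕ → A | ∀ i < n, u i = v i} := by
  rw [show {u : ℕ → A | ∀ i < n, u i = v i}
      = ⋂ i, ⋂ (_ : i < n), {u : ℕ → A | u i ∈ ({v i} : Set A)} by ext u; simp]
  exact MeasurableSet.iInter fun i => MeasurableSet.iInter fun _ => measurableSet_letter i _

lemma measurableSet_lexLe (v : ℕ → A) : MeasurableSet {u : ℕ → A | LexLe u v} := by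
  have hsing : MeasurableSet ({v} : Set (ℕ → A)) := by
    rw [show ({v} : Set (ℕ → A)) = ⋂ n, {u : ℕ → A | u n ∈ ({v n} : Set A)} by
      ext u; simp [funext_iff]]
    exact MeasurableSet.iInter fun n => measurableSet_letter n _
  have : {u : ℕ → A | LexLe u v} =
      (⋃ n, ({u : ℕ → A | ∀ i < n, u i = v i} ∩ {u : ℕ → A | u n ∈ Iio (v n)})) ∪ {v} := by
    ext u
    constructor
    · rintro (⟨n, h1, h2⟩ | rfl)
      · exact Or.inl (mem_iUnion.2 ⟨n, h1, h2⟩)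
      · exact Or.inr rfl
    · rintro (hu | rfl)
      · obtain ⟨n, hn⟩ := mem_iUnion.1 hu
        exact Or.inl ⟨n, hn.1, hn.2⟩
      · exact Or.inr rfl
  rw [this]
  exact (MeasurableSet.iUnion fun n =>
    (measurableSet_agree v n).inter (measurableSet_letter n _)).union hsing

lemma isClosed_agree (v : ℕ → A) (n : ℕ) : IsClosed {u : ℕ → A | ∀ i < n, u i = v i} := by
  rw [show {u : ℕ → A | ∀ i < n, u i = v i}
      = ⋂ i, ⋂ (_ : i < n), (fun u : ℕ → A => u i) ⁻¹' {v i} by ext u; simp]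
  exact isClosed_iInter fun i => isClosed_iInter fun _ =>
    (isClosed_discrete _).preimage (continuous_apply i)

end Meas

/-- The map `φ_μ(w) = μ([w_min, w])` is onto `[0,1]`. -/
theorem phi_mu_surjective
    {A : Type*} [Fintype A] [TopologicalSpace A] [DiscreteTopology A] [LinearOrder A]
    [MeasurableSpace A] [BorelSpace A]
    (L : Set (ℕ → A)) (hL : IsShiftSpace L)
    (μ : Measure (ℕ → A)) [IsProbabilityMeasure μ] (hμL : μ L = 1)
    (hreg : μ.Regular)
    (hsing : ∀ w : ℕ → A, μ {w} = 0)
    (hcyl : ∀ v : List A, (Cyl L v).Nonempty → 0 < μ (Cyl L v))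
    (wmin : ℕ → A) (hwmin : wmin ∈ L) (hwmin' : ∀ w ∈ L, LexLe wmin w) :
    ∀ x ∈ Set.Icc (0:ℝ) 1, ∃ w ∈ L, (μ (wordInterval L wmin w)).toReal = x := by
  classical
  intro x hx
  haveI : Nonempty A := ⟨wmin 0⟩
  obtain ⟨hx0, hx1⟩ := hx
  set c : ENNReal := ENNReal.ofReal x with hc
  have hLmeas : MeasurableSet L := hL.1.measurableSet
  set Le : (ℕ → A) → Set (ℕ → A) := fun v => {u | u ∈ L ∧ LexLe u v} with hLedef
  have hLe_meas : ∀ v, MeasurableSet (Le v) := fun v => hLmeas.inter (measurableSet_lexLe v)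
  have hLe_mono : ∀ {v v' : ℕ → A}, LexLe v v' → Le v ⊆ Le v' := by
    intro v v' hvv' u hu
    exact ⟨hu.1, (lexLe_iff _ _).2
      (le_trans ((lexLe_iff _ _).1 hu.2) ((lexLe_iff _ _).1 hvv'))⟩
  set S : Set (ℕ → A) := {v | v ∈ L ∧ c ≤ μ (Le v)} with hSdef
  obtain ⟨wmax, hwmaxL, hwmax⟩ := exists_lex_max hL.1 ⟨wmin, hwmin⟩
  have hSne : S.Nonempty := by
    refine ⟨wmax, hwmaxL, ?_⟩
    have hLeq : Le wmax = L := by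
      ext u; exact ⟨fun h => h.1, fun h => ⟨h, hwmax u h⟩⟩
    rw [hLeq, hμL]
    exact ENNReal.ofReal_le_one.2 hx1
  obtain ⟨w, hwcS, hwlb⟩ := exists_lex_min (isClosed_closure (s := S)) hSne.closure
  have hclSL : closure S ⊆ L := closure_minimal (fun v hv => hv.1) hL.1
  have hwL : w ∈ L := hclSL hwcS
  -- approximating sequence from S
  have happrox : ∀ n : ℕ, ∃ z ∈ S, ∀ i < n, z i = w i := by
    intro n
    have hopen : IsOpen {u : ℕ → A | ∀ i < n, u i = w i} := by
      rw [show {u : ℕ → A | ∀ i < n, u i = w i}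
          = ⋂ i ∈ Finset.range n, (fun u : ℕ → A => u i) ⁻¹' {w i} by ext u; simp]
      exact isOpen_biInter_finset fun i _ =>
        (isOpen_discrete _).preimage (continuous_apply i)
    obtain ⟨z, hz1, hz2⟩ := mem_closure_iff.1 hwcS _ hopen (fun i _ => rfl)
    exact ⟨z, hz2, hz1⟩
  choose zf hzfS hzfw using happrox
  have hwzf : ∀ k, toLex w ≤ toLex (zf k) :=
    fun k => (lexLe_iff _ _).1 (hwlb (zf k) (subset_closure (hzfS k)))
  -- Claim 1 : c ≤ μ (Le w)
  set Afam : ℕ → Set (ℕ → A) := fun n => ⋂ k ∈ Finset.range (n + 1), Le (zf k) with hAdef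
  have hAanti : Antitone Afam := by
    intro m n hmn u hu
    refine Set.mem_iInter₂.2 fun k hk => Set.mem_iInter₂.1 hu k ?_
    rw [Finset.mem_range] at hk ⊢
    omega
  have hAmeas : ∀ n, NullMeasurableSet (Afam n) μ := fun n =>
    (MeasurableSet.iInter fun k => MeasurableSet.iInter fun _ =>
      hLe_meas (zf k)).nullMeasurableSet
  have hAinter : (⋂ n, Afam n) = Le w := by
    apply Set.Subset.antisymm
    · intro u hu
      have hmem : ∀ k, u ∈ Le (zf k) := fun k =>
        Set.mem_iInter₂.1 (Set.mem_iInter.1 hu k) k (Finset.mem_range.2 (by omega))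
      refine ⟨(hmem 0).1, ?_⟩
      rw [lexLe_iff]
      by_contra hlt
      obtain ⟨m, hpre, hm⟩ := (lexLt_iff w u).2 (not_le.1 hlt)
      have hzu : toLex (zf (m + 1)) < toLex u := by
        refine (lexLt_iff _ _).1 ⟨m, fun i hi => (hzfw (m + 1) i (by omega)).trans (hpre i hi), ?_⟩
        rw [hzfw (m + 1) m (by omega)]
        exact hm
      exact absurd (lt_of_lt_of_le hzu ((lexLe_iff _ _).1 (hmem (m + 1)).2)) (lt_irrefl _)
    · intro u hu
      refine Set.mem_iInter.2 fun n => Set.mem_iInter₂.2 fun k _ =>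
        hLe_mono ((lexLe_iff _ _).2 (hwzf k)) hu
  have hAc : ∀ n, c ≤ μ (Afam n) := by
    intro n
    obtain ⟨j, hj, hjle⟩ := Finset.exists_min_image (Finset.range (n + 1))
      (fun k => toLex (zf k)) ⟨0, Finset.mem_range.2 (by omega)⟩
    refine le_trans (hzfS j).2 (measure_mono fun u hu => ?_)
    exact Set.mem_iInter₂.2 fun k hk => hLe_mono ((lexLe_iff _ _).2 (hjle k hk)) hu
  have h1 : c ≤ μ (Le w) := by
    rw [← hAinter]
    exact ge_of_tendsto' (tendsto_measure_iInter_atTop hAmeas hAanti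
      ⟨0, measure_ne_top μ _⟩) hAc
  -- Claim 2 : μ (Le w) ≤ c
  have h2 : μ (Le w) ≤ c := by
    set Lt : Set (ℕ → A) := {u | u ∈ L ∧ LexLt u w} with hLtdef
    have hLtle : μ (Le w) ≤ μ Lt := by
      have hsub : Le w ⊆ Lt ∪ {w} := by
        rintro u ⟨huL, hlt | rfl⟩
        · exact Or.inl ⟨huL, hlt⟩
        · exact Or.inr rfl
      calc μ (Le w) ≤ μ (Lt ∪ {w}) := measure_mono hsub
        _ ≤ μ Lt + μ {w} := measure_union_le _ _
        _ = μ Lt := by rw [hsing w, add_zero]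
    set B : ℕ → Set (ℕ → A) :=
      fun n => {u | u ∈ L ∧ ∃ m < n, (∀ i < m, u i = w i) ∧ u m < w m} with hBdef
    have hBmono : Monotone B := by
      rintro m n hmn u ⟨huL, k, hk, h⟩
      exact ⟨huL, k, lt_of_lt_of_le hk hmn, h⟩
    have hBunion : (⋃ n, B n) = Lt := by
      ext u
      constructor
      · rintro hu
        obtain ⟨n, huL, m, _, h⟩ := mem_iUnion.1 hu
        exact ⟨huL, m, h⟩
      · rintro ⟨huL, m, h⟩
        exact mem_iUnion.2 ⟨m + 1, huL, m, by omega, h⟩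
    have hBle : ∀ n, μ (B n) ≤ c := by
      intro n
      rcases Set.eq_empty_or_nonempty (B n) with hBe | hBne
      · simp [hBe]
      · have hBclosed : IsClosed (B n) := by
          have : B n = L ∩ ⋃ m ∈ Finset.range n,
              ({u : ℕ → A | ∀ i < m, u i = w i} ∩ (fun u : ℕ → A => u m) ⁻¹' Iio (w m)) := by
            ext u
            simp only [hBdef, mem_setOf_eq, mem_inter_iff, mem_iUnion, Finset.mem_range,
              mem_preimage, mem_Iio]
            tauto
          rw [this]
          exact hL.1.inter ((Finset.range n).finite_toSet.isClosed_biUnion fun m _ =>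
            (isClosed_agree w m).inter ((isClosed_discrete _).preimage (continuous_apply m)))
        obtain ⟨zmax, hzmaxB, hzmax⟩ := exists_lex_max hBclosed hBne
        have hzmaxLtw : toLex zmax < toLex w := by
          obtain ⟨m, _, h⟩ := hzmaxB.2
          exact (lexLt_iff _ _).1 ⟨m, h.1, h.2⟩
        by_contra hcon
        push_neg at hcon
        have hzmaxS : zmax ∈ S := by
          refine ⟨hzmaxB.1, le_trans hcon.le (measure_mono fun u hu => ?_)⟩
          exact ⟨hu.1, hzmax u hu⟩
        exact absurd (lt_of_le_of_lt ((lexLe_iff _ _).1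
          (hwlb zmax (subset_closure hzmaxS))) hzmaxLtw) (lt_irrefl _)
    calc μ (Le w) ≤ μ Lt := hLtle
      _ = μ (⋃ n, B n) := by rw [hBunion]
      _ = ⨆ n, μ (B n) := hBmono.measure_iUnion
      _ ≤ c := iSup_le hBle
  refine ⟨w, hwL, ?_⟩
  have hWI : wordInterval L wmin w = Le w := by
    ext u
    exact ⟨fun h => ⟨h.1, h.2.2⟩, fun h => ⟨h.1, hwmin' u h.1, h.2⟩⟩
  rw [hWI, le_antisymm h2 h1, hc, ENNReal.toReal_ofReal hx0]
end

section
/- Let L be a shift space such that the set of factors of L is prolongable (every factor extends to the left and right by letters within Fact_L). Let a be a letter and u a factor of L that is not left special (u has a unique left letter extension in Fact_L). Then for any w, w' ∈ Cyl_L(au) with w < w', the shift map satisfies σ([w, w']) = [σ(w), σ(w')]. -/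
open MeasureTheory Topology Filter Set

lemma shift_iter_apply' {A : Type*} (k : ℕ) (w : ℕ → A) (n : ℕ) :
    shiftMap^[k] w n = w (n + k) := by
  induction k generalizing w n with
  | zero => rfl
  | succ k ih =>
    rw [Function.iterate_succ_apply, ih]
    rfl

lemma shift_iter_mem' {A : Type*} [TopologicalSpace A] {L : Set (ℕ → A)}
    (hL : IsShiftSpace L) (k : ℕ) {w : ℕ → A} (hw : w ∈ L) : shiftMap^[k] w ∈ L := by
  induction k with
  | zero => exact hw
  | succ k ih => rw [Function.iterate_succ_apply']; exact hL.2 _ ih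

lemma isFactor_cons_of_prefix' {A : Type*} {L : Set (ℕ → A)} {b : A} {u v : List A}
    (hlen : u.length ≤ v.length)
    (hget : ∀ i (h : i < u.length), u.get ⟨i, h⟩ = v.get ⟨i, lt_of_lt_of_le h hlen⟩)
    (h : IsFactor L (b :: v)) : IsFactor L (b :: u) := by
  obtain ⟨ω, hω, j, hocc⟩ := h
  refine ⟨ω, hω, j, fun i => ?_⟩
  rcases i with ⟨iv, hi⟩
  have hi' : iv < (b :: v).length := by simp only [List.length_cons] at hi ⊢; omega
  have := hocc ⟨iv, hi'⟩
  rw [this]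
  match iv, hi, hi' with
  | 0, _, _ => rfl
  | Nat.succ m, hi, hi' =>
    simp only [List.get_eq_getElem, List.getElem_cons_succ]
    have hm : m < u.length := by simp at hi; omega
    have := hget m hm
    simpa using this.symm

lemma lexLe_sandwich' {A : Type*} [LinearOrder A] {w w' z : ℕ → A} {m : ℕ}
    (hagree : ∀ i < m, w i = w' i) (h1 : LexLe w z) (h2 : LexLe z w') :
    ∀ i < m, z i = w i := by
  intro i hi
  rcases h1 with ⟨n, hn, hlt⟩ | rfl
  · rcases h2 with ⟨p, hp, hlt'⟩ | rfl
    · by_cases hnm : m ≤ n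
      · exact (hn i (lt_of_lt_of_le hi hnm)).symm
      · exfalso
        push_neg at hnm
        rcases lt_trichotomy p n with h | h | h
        · rw [← hagree p (h.trans hnm), hn p h] at hlt'
          exact lt_irrefl _ hlt'
        · subst h
          rw [← hagree p hnm] at hlt'
          exact lt_irrefl _ (hlt.trans hlt')
        · have h1 := hp n h
          rw [← hagree n hnm] at h1
          rw [h1] at hlt
          exact lt_irrefl _ hlt
    · exact (hagree i hi).symm
  · rfl

lemma lexLe_shift' {A : Type*} [LinearOrder A] {w z : ℕ → A} (h0 : w 0 = z 0)
    (h : LexLe w z) : LexLe (shiftMap w) (shiftMap z) := by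
  rcases h with ⟨n, hn, hlt⟩ | rfl
  · match n, hlt with
    | 0, hlt => rw [h0] at hlt; exact absurd hlt (lt_irrefl _)
    | Nat.succ m, hlt =>
      exact Or.inl ⟨m, fun i hi => hn (i + 1) (by omega), hlt⟩
  · exact Or.inr rfl

lemma lexLe_unshift' {A : Type*} [LinearOrder A] {w z : ℕ → A} (h0 : w 0 = z 0)
    (h : LexLe (shiftMap w) (shiftMap z)) : LexLe w z := by
  rcases h with ⟨n, hn, hlt⟩ | heq
  · refine Or.inl ⟨n + 1, fun i hi => ?_, hlt⟩
    match i, hi with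
    | 0, _ => exact h0
    | Nat.succ k, hi => exact hn k (by omega)
  · refine Or.inr (funext fun i => ?_)
    match i with
    | 0 => exact h0
    | Nat.succ k => exact congrFun heq k

lemma mem_of_approx' {A : Type*} [TopologicalSpace A] [DiscreteTopology A]
    {L : Set (ℕ → A)} (hclosed : IsClosed L) (z : ℕ → A)
    (h : ∀ n, ∃ zn ∈ L, ∀ k < n, zn k = z k) : z ∈ L := by
  choose zn hmem hagree using h
  have htend : Filter.Tendsto zn Filter.atTop (nhds z) := by
    rw [tendsto_pi_nhds]
    intro k
    apply Filter.Tendsto.congr' _ tendsto_const_nhds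
    filter_upwards [Filter.eventually_ge_atTop (k + 1)] with n hn
    exact (hagree n k (by omega)).symm
  exact hclosed.mem_of_tendsto htend (Filter.Eventually.of_forall hmem)

/-- If `Fact_L` is prolongable and `u` is a factor that is not left special,
then for `w < w'` in `Cyl_L(au)`, `σ([w,w']) = [σ(w), σ(w')]`. -/
theorem shift_image_of_word_interval
    {A : Type*} [Fintype A] [TopologicalSpace A] [DiscreteTopology A] [LinearOrder A]
    (L : Set (ℕ → A)) (hL : IsShiftSpace L) (hprol : Prolongable L)
    (a : A) (u : List A) (hu : IsFactor L u)
    (hnls : ∀ b c : A, IsFactor L (b :: u) → IsFactor L (c :: u) → b = c)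
    (w w' : ℕ → A) (hw : w ∈ Cyl L (a :: u)) (hw' : w' ∈ Cyl L (a :: u))
    (hlt : LexLt w w') :
    shiftMap '' (wordInterval L w w') = wordInterval L (shiftMap w) (shiftMap w') := by
  obtain ⟨hwL, hwocc⟩ := hw
  obtain ⟨hw'L, hw'occ⟩ := hw'
  have hwv : ∀ i (h : i < u.length + 1), w i = (a :: u).get ⟨i, by simpa using h⟩ := by
    intro i h
    have := hwocc ⟨i, by simpa using h⟩
    simpa using this
  have hw'v : ∀ i (h : i < u.length + 1), w' i = (a :: u).get ⟨i, by simpa using h⟩ := by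
    intro i h
    have := hw'occ ⟨i, by simpa using h⟩
    simpa using this
  have hww' : ∀ i < u.length + 1, w i = w' i := fun i h => (hwv i h).trans (hw'v i h).symm
  have hw0 : w 0 = a := hwv 0 (by omega)
  have hw'0 : w' 0 = a := hw'v 0 (by omega)
  have hσw : ∀ i (h : i < u.length), shiftMap w i = u.get ⟨i, h⟩ := by
    intro i h
    have := hwv (i + 1) (by omega)
    simpa [shiftMap] using this
  have hσw' : ∀ i (h : i < u.length), shiftMap w' i = u.get ⟨i, h⟩ := by
    intro i h
    have := hw'v (i + 1) (by omega)
    simpa [shiftMap] using this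
  ext y
  constructor
  · rintro ⟨z, ⟨hzL, hz1, hz2⟩, rfl⟩
    have hz0 : z 0 = w 0 := lexLe_sandwich' hww' hz1 hz2 0 (by omega)
    exact ⟨hL.2 z hzL, lexLe_shift' hz0.symm hz1,
      lexLe_shift' (hz0.trans (hww' 0 (by omega))) hz2⟩
  · rintro ⟨hyL, hy1, hy2⟩
    have hσagree : ∀ i < u.length, shiftMap w i = shiftMap w' i :=
      fun i h => (hσw i h).trans (hσw' i h).symm
    have hyu : ∀ i (h : i < u.length), y i = u.get ⟨i, h⟩ :=
      fun i h => (lexLe_sandwich' hσagree hy1 hy2 i h).trans (hσw i h)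
    set z : ℕ → A := fun k => Nat.casesOn k a y with hzdef
    have happrox : ∀ n, ∃ zn ∈ L, ∀ k < n, zn k = z k := by
      intro n
      set m := n + u.length with hm
      set v := prefixWord y m with hv
      have hvlen : v.length = m := by simp [hv, prefixWord]
      have hvget : ∀ i (h : i < m), v.get ⟨i, by omega⟩ = y i := by
        intro i h
        simp [hv, prefixWord]
      have hvfac : IsFactor L v := by
        refine ⟨y, hyL, 0, fun i => ?_⟩
        rcases i with ⟨iv, hi⟩
        rw [hvget iv (by omega)]
        simp
      obtain ⟨b, hb⟩ := (hprol v hvfac).1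
      have hba : b = a := by
        refine hnls b a ?_ ⟨w, hwL, 0, hwocc⟩
        refine isFactor_cons_of_prefix' (by omega) ?_ hb
        intro i h
        rw [hvget i (by omega)]
        exact (hyu i h).symm
      subst hba
      obtain ⟨ω, hω, j, hocc⟩ := hb
      refine ⟨shiftMap^[j] ω, shift_iter_mem' hL j hω, fun k hk => ?_⟩
      have hk' : k < (b :: v).length := by simp [hvlen]; omega
      have := hocc ⟨k, hk'⟩
      rw [shift_iter_apply', Nat.add_comm k j, this]
      match k, hk, hk' with
      | 0, _, _ => rfl
      | Nat.succ i, hk, hk' =>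
        simp only [List.get_eq_getElem, List.getElem_cons_succ]
        have : v.get ⟨i, by simp at hk' ⊢; omega⟩ = y i := hvget i (by simp at hk'; omega)
        simpa using this
    have hzL : z ∈ L := mem_of_approx' hL.1 z happrox
    have hz0 : z 0 = a := rfl
    have hσz : shiftMap z = y := funext fun n => rfl
    refine ⟨z, ⟨hzL, ?_, ?_⟩, hσz⟩
    · exact lexLe_unshift' (hw0.trans hz0.symm) (by rw [hσz]; exact hy1)
    · exact lexLe_unshift' (hz0.trans hw'0.symm) (by rw [hσz]; exact hy2)
end

section
/- If L is a shift space whose factor set is prolongable, a is a letter, and u is a factor of L that is not left special, then σ(Cyl_L(au)) = Cyl_L(u). -/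
open MeasureTheory Topology Filter Set

lemma shiftMap_iterate_apply {A : Type*} (w : ℕ → A) (j n : ℕ) :
    shiftMap^[j] w n = w (n + j) := by
  induction j generalizing w n with
  | zero => simp
  | succ j ih =>
    rw [Function.iterate_succ_apply, ih]
    show w ((n + j) + 1) = w (n + (j + 1))
    congr 1

lemma shiftMap_iterate_mem {A : Type*} [TopologicalSpace A] {L : Set (ℕ → A)}
    (hL : IsShiftSpace L) {w : ℕ → A} (hw : w ∈ L) (j : ℕ) : shiftMap^[j] w ∈ L := by
  induction j with
  | zero => simpa
  | succ j ih => rw [Function.iterate_succ_apply']; exact hL.2 _ ih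

lemma factor_cyl_nonempty {A : Type*} [TopologicalSpace A] {L : Set (ℕ → A)}
    (hL : IsShiftSpace L) {v : List A} (hv : IsFactor L v) :
    ∃ z ∈ L, OccursAt z 0 v := by
  obtain ⟨w, hw, j, hocc⟩ := hv
  refine ⟨shiftMap^[j] w, shiftMap_iterate_mem hL hw j, fun i => ?_⟩
  rw [shiftMap_iterate_apply]
  have := hocc i
  rw [← this]
  congr 1
  omega

/-- If `Fact_L` is prolongable and `u` is not left special, with `au` a factor,
then `σ(Cyl_L(au)) = Cyl_L(u)`. -/
theorem shift_image_of_cylinder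
    {A : Type*} [Fintype A] [TopologicalSpace A] [DiscreteTopology A]
    (L : Set (ℕ → A)) (hL : IsShiftSpace L) (hprol : Prolongable L)
    (a : A) (u : List A) (hu : IsFactor L u) (hau : IsFactor L (a :: u))
    (hnls : ∀ b c : A, IsFactor L (b :: u) → IsFactor L (c :: u) → b = c) :
    shiftMap '' (Cyl L (a :: u)) = Cyl L u := by
  ext w
  constructor
  · rintro ⟨z, ⟨hzL, hzocc⟩, rfl⟩
    refine ⟨hL.2 z hzL, fun i => ?_⟩
    have := hzocc ⟨i + 1, by simpa using Nat.succ_lt_succ i.2⟩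
    simpa [shiftMap, Nat.add_comm] using this
  · rintro ⟨hwL, hwocc⟩
    -- for each n, pick a left extension of the length-n prefix of w
    have hpref : ∀ n : ℕ, IsFactor L (prefixWord w n) := by
      intro n
      exact ⟨w, hwL, 0, fun i => by
        rcases i with ⟨k, hk⟩
        simp [prefixWord, List.get_ofFn]⟩
    have hext : ∀ n : ℕ, ∃ z ∈ L, OccursAt z 0
        ((Classical.choose ((hprol _ (hpref n)).1)) :: prefixWord w n) :=
      fun n => factor_cyl_nonempty hL (Classical.choose_spec ((hprol _ (hpref n)).1))
    choose z hzL hzocc using hext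
    set b : ℕ → A := fun n => Classical.choose ((hprol _ (hpref n)).1) with hb
    -- facts about z n
    have hz0 : ∀ n, z n 0 = b n := fun n => hzocc n ⟨0, Nat.succ_pos _⟩
    have hzw : ∀ n, ∀ j < n, z n (j + 1) = w j := by
      intro n j hj
      have := hzocc n ⟨j + 1, by simp only [List.length_cons, prefixWord, List.length_ofFn]; omega⟩
      simp only [List.length_cons] at this
      rw [show (0 : ℕ) + (j+1) = j + 1 by omega] at this
      rw [this]
      simp [prefixWord, List.get_ofFn]
    -- for n ≥ u.length, b n = a
    have hba : ∀ n, u.length ≤ n → b n = a := by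
      intro n hn
      refine hnls _ _ ⟨z n, hzL n, 0, fun i => ?_⟩ hau
      rcases i with ⟨i, hi⟩
      simp only [List.length_cons] at hi
      match i, hi with
      | 0, _ => simpa using hz0 n
      | (j+1), hi =>
        have hj : j < u.length := by omega
        have := hzw n j (lt_of_lt_of_le hj hn)
        rw [show (0 : ℕ) + (j+1) = j + 1 by omega, this]
        have := hwocc ⟨j, hj⟩
        simpa using this
    -- the limit word
    set x : ℕ → A := fun k => match k with | 0 => a | (k+1) => w k with hx
    have htend : Filter.Tendsto z Filter.atTop (nhds x) := by
      rw [tendsto_pi_nhds]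
      intro k
      refine tendsto_const_nhds.congr' ?_
      filter_upwards [Filter.eventually_ge_atTop (max (k + 1) u.length)] with n hn
      match k with
      | 0 => simp only [hx]; rw [hz0 n, hba n (le_trans (le_max_right _ _) hn)]
      | (j+1) =>
        simp only [hx]
        exact (hzw n j (by omega)).symm
    have hxL : x ∈ L := hL.1.mem_of_tendsto htend (Filter.Eventually.of_forall hzL)
    refine ⟨x, ⟨hxL, fun i => ?_⟩, funext fun k => rfl⟩
    rcases i with ⟨i, hi⟩
    simp only [List.length_cons] at hi
    match i, hi with
    | 0, _ => rfl
    | (j+1), hi =>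
      have hj : j < u.length := by omega
      have := hwocc ⟨j, hj⟩
      rw [show (0 : ℕ) + (j+1) = j + 1 by omega]
      simpa using this
end

section
/- Let L be a minimal shift with linear factor complexity, i.e., p_L(n) = O(n). Then the set SP_L of infinite left special words of L is finite. -/
open MeasureTheory Topology Filter Set

section AuxSP

variable {A : Type*}

lemma occursAt_shift_aux {w : ℕ → A} {j : ℕ} {v : List A}
    (h : OccursAt (shiftMap w) j v) : OccursAt w (j + 1) v := by
  intro i
  have hi : w (j + (i : ℕ) + 1) = v.get i := h i
  rw [show j + 1 + (i : ℕ) = j + (i : ℕ) + 1 from by omega]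
  exact hi

lemma IsFactor.tail_of_cons {L : Set (ℕ → A)} {a : A} {v : List A}
    (h : IsFactor L (a :: v)) : IsFactor L v := by
  obtain ⟨w, hw, j, hj⟩ := h
  refine ⟨w, hw, j + 1, fun i => ?_⟩
  have hi := hj i.succ
  rw [show j + 1 + (i : ℕ) = j + (i.succ : ℕ) from by simp [Fin.val_succ]; omega]
  simpa using hi

lemma isFactor_of_leftSpecial {L : Set (ℕ → A)} {v : List A}
    (h : IsLeftSpecial L v) : IsFactor L v := by
  obtain ⟨a, b, _, ha, _⟩ := h
  exact ha.tail_of_cons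

lemma isOpen_occursAt [TopologicalSpace A] [DiscreteTopology A] (j : ℕ) (v : List A) :
    IsOpen {w : ℕ → A | OccursAt w j v} := by
  have heq : {w : ℕ → A | OccursAt w j v}
      = ⋂ i : Fin v.length, (fun w : ℕ → A => w (j + i)) ⁻¹' {v.get i} := by
    ext w; simp [OccursAt, Set.mem_iInter]
  rw [heq]
  exact isOpen_iInter_of_finite fun i =>
    (isOpen_discrete _).preimage (continuous_apply (j + (i : ℕ)))

/-- In a minimal shift, every factor occurs in every word. -/
lemma occurs_in_all [TopologicalSpace A] [DiscreteTopology A]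
    {L : Set (ℕ → A)} (hL : IsMinimalShift L) {v : List A} (hv : IsFactor L v) :
    ∀ w ∈ L, ∃ j, OccursAt w j v := by
  by_contra hcon
  push_neg at hcon
  obtain ⟨w0, hw0, hno⟩ := hcon
  set L'' := {w ∈ L | ∀ j, ¬ OccursAt w j v} with hL''def
  have hsub : L'' ⊆ L := fun w hw => hw.1
  have hclosed : IsClosed L'' := by
    have : L'' = L ∩ ⋂ j : ℕ, {w : ℕ → A | OccursAt w j v}ᶜ := by
      ext w; simp [hL''def, Set.mem_iInter]
    rw [this]
    exact hL.1.1.inter (isClosed_iInter fun j => (isOpen_occursAt j v).isClosed_compl)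
  have hinv : ∀ w ∈ L'', shiftMap w ∈ L'' := by
    rintro w ⟨hwL, hwno⟩
    exact ⟨hL.1.2 w hwL, fun j hj => hwno (j + 1) (occursAt_shift_aux hj)⟩
  have heq : L'' = L := hL.2.2 L'' hsub ⟨hclosed, hinv⟩ ⟨w0, hw0, hno⟩
  obtain ⟨w, hw, j, hj⟩ := hv
  rw [← heq] at hw
  exact hw.2 j hj

/-- In a minimal shift, every factor extends on the left. -/
lemma exists_left_ext [TopologicalSpace A] [DiscreteTopology A]
    {L : Set (ℕ → A)} (hL : IsMinimalShift L) {v : List A} (hv : IsFactor L v) :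
    ∃ a, IsFactor L (a :: v) := by
  obtain ⟨w, hw⟩ := hL.2.1
  obtain ⟨j, hj⟩ := occurs_in_all hL hv (shiftMap w) (hL.1.2 w hw)
  have hj' : OccursAt w (j + 1) v := occursAt_shift_aux hj
  refine ⟨w j, w, hw, j, fun i => ?_⟩
  refine Fin.cases ?_ (fun k => ?_) i
  · simp
  · have hk := hj' k
    rw [show j + ((k.succ : ℕ)) = j + 1 + (k : ℕ) from by simp [Fin.val_succ]; omega]
    simpa using hk

lemma finite_len_subtype [Fintype A] (n : ℕ) (P : List A → Prop) :
    Finite {v : List A // v.length = n ∧ P v} := by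
  refine Finite.of_injective
    (fun x : {v : List A // v.length = n ∧ P v} =>
      (fun i : Fin n => x.1.get (Fin.cast x.2.1.symm i))) ?_
  rintro ⟨v, hv, _⟩ ⟨u, hu, _⟩ h
  apply Subtype.ext
  apply List.ext_get (by rw [hv, hu])
  intro i h1 h2
  have := congrFun h (⟨i, hv ▸ h1⟩ : Fin n)
  simpa using this

/-- Key inequality: `p(n) + sp(n) ≤ p(n+1)` for a minimal shift. -/
lemma complexity_step [Fintype A] [TopologicalSpace A] [DiscreteTopology A]
    {L : Set (ℕ → A)} (hL : IsMinimalShift L) (n : ℕ) :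
    complexity L n + splCount L n ≤ complexity L (n + 1) := by
  classical
  let F := {v : List A // v.length = n ∧ IsFactor L v}
  let S := {v : List A // v.length = n ∧ IsFactor L v ∧ IsLeftSpecial L v}
  let F' := {v : List A // v.length = n + 1 ∧ IsFactor L v}
  have hFfin : Finite F := finite_len_subtype n _
  have hSfin : Finite S := finite_len_subtype n _
  have hF'fin : Finite F' := finite_len_subtype (n + 1) _
  have haF : ∀ x : F, ∃ a, IsFactor L (a :: x.1) := fun x => exists_left_ext hL x.2.2
  choose aF haF using haF
  have hg : ∀ x : S, ∃ b, b ≠ aF ⟨x.1, x.2.1, x.2.2.1⟩ ∧ IsFactor L (b :: x.1) := by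
    rintro ⟨v, hv, hfac, a, b, hab, ha, hb⟩
    by_cases h : a = aF ⟨v, hv, hfac⟩
    · exact ⟨b, by rw [← h]; exact hab.symm, hb⟩
    · exact ⟨a, h, ha⟩
  choose g hg1 hg2 using hg
  let φ : F ⊕ S → F' := fun x =>
    match x with
    | Sum.inl x => ⟨aF x :: x.1, by simp [x.2.1], haF x⟩
    | Sum.inr x => ⟨g x :: x.1, by simp [x.2.1], hg2 x⟩
  have hinj : Function.Injective φ := by
    rintro (x | x) (y | y) h
    · have h' := congrArg Subtype.val h
      simp only [φ, List.cons.injEq] at h'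
      exact congrArg Sum.inl (Subtype.ext h'.2)
    · have h' := congrArg Subtype.val h
      simp only [φ, List.cons.injEq] at h'
      exfalso
      have hx : x = ⟨y.1, y.2.1, y.2.2.1⟩ := Subtype.ext h'.2
      apply hg1 y
      rw [← h'.1, hx]
    · have h' := congrArg Subtype.val h
      simp only [φ, List.cons.injEq] at h'
      exfalso
      have hy : y = ⟨x.1, x.2.1, x.2.2.1⟩ := Subtype.ext h'.2.symm
      apply hg1 x
      rw [h'.1, hy]
    · have h' := congrArg Subtype.val h
      simp only [φ, List.cons.injEq] at h'
      exact congrArg Sum.inr (Subtype.ext h'.2)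
  calc complexity L n + splCount L n = Nat.card (F ⊕ S) := (Nat.card_sum).symm
    _ ≤ Nat.card F' := Nat.card_le_card_of_injective φ hinj
    _ = complexity L (n + 1) := rfl

lemma complexity_growth [Fintype A] [TopologicalSpace A] [DiscreteTopology A]
    {L : Set (ℕ → A)} (hL : IsMinimalShift L) (n0 K : ℕ)
    (hK : ∀ n, n0 ≤ n → K ≤ splCount L n) :
    ∀ m : ℕ, m * K ≤ complexity L (n0 + m) := by
  intro m
  induction m with
  | zero => simp
  | succ m ih =>
    have h1 := complexity_step hL (n0 + m)
    have h2 := hK (n0 + m) (Nat.le_add_right _ _)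
    calc (m + 1) * K = m * K + K := by ring
      _ ≤ complexity L (n0 + m) + splCount L (n0 + m) := Nat.add_le_add ih h2
      _ ≤ complexity L (n0 + m + 1) := h1
      _ = complexity L (n0 + (m + 1)) := by rw [Nat.add_assoc]

end AuxSP

/-- A minimal shift with linear factor complexity (`p_L(n) = O(n)`) has
finitely many infinite left special words. -/
theorem SP_finite_of_linear_complexity
    {A : Type*} [Fintype A] [TopologicalSpace A] [DiscreteTopology A]
    (L : Set (ℕ → A)) (hL : IsMinimalShift L)
    (hlin : ∃ C : ℕ, ∀ n : ℕ, 1 ≤ n → complexity L n ≤ C * n) :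
    (SPset L).Finite := by
  classical
  obtain ⟨C, hC⟩ := hlin
  by_contra hfin
  have hinf : (SPset L).Infinite := hfin
  let f : ℕ ↪ (SPset L) := hinf.natEmbedding
  -- separation indices
  have hsep : ∀ i j : Fin (C + 1), ∃ m : ℕ, i ≠ j → (f i : ℕ → A) m ≠ (f j : ℕ → A) m := by
    intro i j
    by_cases hij : i = j
    · exact ⟨0, fun h => absurd hij h⟩
    · have hne : ((f i : ℕ → A)) ≠ (f j : ℕ → A) := by
        intro h
        exact hij (Fin.val_injective (f.injective (Subtype.ext h)))
      obtain ⟨m, hm⟩ := Function.ne_iff.mp hne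
      exact ⟨m, fun _ => hm⟩
  choose d hd using hsep
  set n0 : ℕ := (Finset.univ.sup fun p : Fin (C + 1) × Fin (C + 1) => d p.1 p.2) + 1 with hn0
  have hdlt : ∀ i j : Fin (C + 1), d i j < n0 := by
    intro i j
    have : d i j ≤ Finset.univ.sup fun p : Fin (C + 1) × Fin (C + 1) => d p.1 p.2 :=
      Finset.le_sup (f := fun p : Fin (C + 1) × Fin (C + 1) => d p.1 p.2)
        (Finset.mem_univ (i, j))
    omega
  -- for n ≥ n0, the prefixes of f 0, ..., f C are distinct left special factors
  have hKK : ∀ n, n0 ≤ n → C + 1 ≤ splCount L n := by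
    intro n hn
    have hspecial : ∀ i : Fin (C + 1), IsLeftSpecial L (prefixWord (f i : ℕ → A) n) :=
      fun i => (f i).2 n
    let π : Fin (C + 1) → {v : List A // v.length = n ∧ IsFactor L v ∧ IsLeftSpecial L v} :=
      fun i => ⟨prefixWord (f i : ℕ → A) n, by simp [prefixWord],
        isFactor_of_leftSpecial (hspecial i), hspecial i⟩
    have hπ : Function.Injective π := by
      intro i j hij
      by_contra hne
      have hval := congrArg Subtype.val hij
      have hdij : d i j < n := lt_of_lt_of_le (hdlt i j) hn
      have h1 : (prefixWord (f i : ℕ → A) n)[d i j]?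
          = (prefixWord (f j : ℕ → A) n)[d i j]? :=
        congrArg (fun l : List A => l[d i j]?) hval
      simp only [prefixWord, List.getElem?_ofFn, hdij, dif_pos, Option.pbind_some,
        Option.some.injEq] at h1
      exact hd i j hne h1
    haveI hfin' : Finite {v : List A // v.length = n ∧ IsFactor L v ∧ IsLeftSpecial L v} :=
      finite_len_subtype n _
    have hle := Nat.card_le_card_of_injective π hπ
    have hcard : Nat.card (Fin (C + 1)) = C + 1 := by simp
    rw [hcard] at hle
    exact hle
  -- growth contradiction
  set m : ℕ := C * n0 + 1 with hm
  have hgrow := complexity_growth hL n0 (C + 1) hKK m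
  have hupper := hC (n0 + m) (by omega)
  nlinarith [hgrow, hupper]
end

section
/- Let T be a piecewise increasing interval exchange transformation of [0,1) and P a finite monotonicity partition of [0,1) into right-open intervals on each of which T is increasing. Then the symbolic coding map cod_P : [0,1) → A^ℕ, sending x to the sequence of labels of the partition elements containing T^n(x), is non-decreasing for the lexicographic order. If moreover every orbit of T is dense, then cod_P is strictly increasing. -/
open MeasureTheory Topology Filter Set

/-- The symbolic coding of a piecewise increasing IET with respect to a
finite monotonicity partition is non-decreasing for the lexicographic order, and strictly
increasing if all orbits of `T` are dense. (The hypothesis `hgrow` expresses that `T` is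
an interval exchange, piecewise increasing with unit slopes, on each partition
interval.) -/
theorem coding_monotone_of_piecewise_increasing_IET
    (m : ℕ) (hm : 0 < m) (y : Fin (m + 1) → ℝ)
    (hy : StrictMono y) (hy0 : y 0 = 0) (hy1 : y (Fin.last m) = 1)
    (T : ℝ → ℝ)
    (hmaps : Set.MapsTo T (Set.Ico (0:ℝ) 1) (Set.Ico (0:ℝ) 1))
    (hgrow : ∀ i : Fin m, ∀ z ∈ Set.Ico (y i.castSucc) (y i.succ),
      ∀ z' ∈ Set.Ico (y i.castSucc) (y i.succ), z ≤ z' → z' - z ≤ T z' - T z)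
    (α : ℝ → Fin m)
    (hα : ∀ z ∈ Set.Ico (0:ℝ) 1, z ∈ Set.Ico (y (α z).castSucc) (y (α z).succ)) :
    (∀ x ∈ Set.Ico (0:ℝ) 1, ∀ x' ∈ Set.Ico (0:ℝ) 1, x ≤ x' →
      LexLe (fun n : ℕ => α (T^[n] x)) (fun n : ℕ => α (T^[n] x'))) ∧
    ((∀ x ∈ Set.Ico (0:ℝ) 1, ∀ z ∈ Set.Ico (0:ℝ) 1, ∀ ε > (0:ℝ),
        ∃ n : ℕ, |T^[n] x - z| < ε) →
      ∀ x ∈ Set.Ico (0:ℝ) 1, ∀ x' ∈ Set.Ico (0:ℝ) 1, x < x' →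
        LexLt (fun n : ℕ => α (T^[n] x)) (fun n : ℕ => α (T^[n] x'))) := by
  -- iterates stay in [0,1)
  have hiter : ∀ (x : ℝ), x ∈ Set.Ico (0:ℝ) 1 → ∀ n : ℕ, T^[n] x ∈ Set.Ico (0:ℝ) 1 := by
    intro x hx n
    induction n with
    | zero => simpa using hx
    | succ k ih => rw [Function.iterate_succ_apply']; exact hmaps ih
  -- α is monotone
  have hαmono : ∀ z ∈ Set.Ico (0:ℝ) 1, ∀ z' ∈ Set.Ico (0:ℝ) 1, z ≤ z' → α z ≤ α z' := by
    intro z hz z' hz' hle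
    by_contra h
    push_neg at h
    have h1 : (α z').succ ≤ (α z).castSucc := by
      have : (α z' : ℕ) + 1 ≤ (α z : ℕ) := h
      simp [Fin.le_def, this]
    have h2 : y (α z').succ ≤ y (α z).castSucc := hy.monotone h1
    have h3 := (hα z hz).1
    have h4 := (hα z' hz').2
    linarith
  -- key induction: if labels agree below n, gaps are preserved
  have key : ∀ x ∈ Set.Ico (0:ℝ) 1, ∀ x' ∈ Set.Ico (0:ℝ) 1, x ≤ x' → ∀ n : ℕ,
      (∀ k < n, α (T^[k] x) = α (T^[k] x')) →
      T^[n] x ≤ T^[n] x' ∧ x' - x ≤ T^[n] x' - T^[n] x := by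
    intro x hx x' hx' hle n
    induction n with
    | zero => intro _; simpa using hle
    | succ k ih =>
      intro hagree
      have ihk := ih (fun j hj => hagree j (Nat.lt_succ_of_lt hj))
      have hk := hagree k (Nat.lt_succ_self k)
      have hzk := hiter x hx k
      have hzk' := hiter x' hx' k
      have hmem : T^[k] x ∈ Set.Ico (y (α (T^[k] x)).castSucc) (y (α (T^[k] x)).succ) :=
        hα _ hzk
      have hmem' : T^[k] x' ∈ Set.Ico (y (α (T^[k] x)).castSucc) (y (α (T^[k] x)).succ) := by
        rw [hk]; exact hα _ hzk'
      have hg := hgrow (α (T^[k] x)) _ hmem _ hmem' ihk.1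
      rw [Function.iterate_succ_apply', Function.iterate_succ_apply']
      constructor <;> linarith [ihk.2]
  -- if labels differ somewhere, get LexLt
  have hlt : ∀ x ∈ Set.Ico (0:ℝ) 1, ∀ x' ∈ Set.Ico (0:ℝ) 1, x ≤ x' →
      (∃ n, α (T^[n] x) ≠ α (T^[n] x')) →
      LexLt (fun n : ℕ => α (T^[n] x)) (fun n : ℕ => α (T^[n] x')) := by
    intro x hx x' hx' hle hex
    classical
    let n := Nat.find hex
    have hne : α (T^[n] x) ≠ α (T^[n] x') := Nat.find_spec hex
    have hagree : ∀ k < n, α (T^[k] x) = α (T^[k] x') := by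
      intro k hk
      by_contra h
      exact absurd (Nat.find_le h) (Nat.not_le.mpr hk)
    have hTle := (key x hx x' hx' hle n hagree).1
    have hαle := hαmono _ (hiter x hx n) _ (hiter x' hx' n) hTle
    exact ⟨n, hagree, lt_of_le_of_ne hαle hne⟩
  constructor
  · intro x hx x' hx' hle
    by_cases hex : ∃ n, α (T^[n] x) ≠ α (T^[n] x')
    · exact Or.inl (hlt x hx x' hx' hle hex)
    · push_neg at hex
      exact Or.inr (funext hex)
  · intro hdense x hx x' hx' hlt'
    apply hlt x hx x' hx' hlt'.le
    by_contra hall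
    push_neg at hall
    set d := x' - x with hd
    have hd0 : 0 < d := by simp [hd]; linarith
    have hd1 : d < 1 := by
      have := hx.1; have := hx'.2; simp [hd]; linarith
    have hz : (1 - d/2 : ℝ) ∈ Set.Ico (0:ℝ) 1 := by
      constructor <;> [linarith; linarith]
    obtain ⟨n, hn⟩ := hdense x hx (1 - d/2) hz (d/2) (by linarith)
    have hkey := (key x hx x' hx' hlt'.le n (fun k _ => hall k)).2
    have h1 : T^[n] x' < 1 := (hiter x' hx' n).2
    have h2 : T^[n] x < 1 - d := by linarith
    rw [abs_lt] at hn
    linarith [hn.1, hn.2]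
end
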